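/- arXiv:1608.00079 — 2 statements merged into one kernel-verified Lean document; each statement's English description precedes it below -/
import Mathlib

section
/- Suppose positive integers v, e, f, k, d1, d2, f1 satisfy v - e + f = 2, 2e = k·v, 2e = f1·d1 + (f-f1)·d2, with d1 > d2 ≥ 3 and k ≥ 3. Then (e/(k·d2))·(4 - (k-2)(d2-2)) = 2 + f1·(d1-d2)/d2 as rational numbers; in particular if f1 ≥ 1 then (k-2)(d2-2) ≤ 3. -/
theorem master_identity (v e f k d1 d2 f1 : ℤ)
    (hv : 0 < v) (he : 0 < e) (hf : 0 < f) (hf1 : 0 ≤ f1)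
    (hk : 3 ≤ k) (hd2 : 3 ≤ d2) (hd : d2 < d1)
    (euler : v - e + f = 2) (handV : 2 * e = k * v)
    (handF : 2 * e = f1 * d1 + (f - f1) * d2) :
    ((e : ℚ) / ((k : ℚ) * (d2 : ℚ))) * (4 - ((k : ℚ) - 2) * ((d2 : ℚ) - 2))
        = 2 + (f1 : ℚ) * ((d1 : ℚ) - (d2 : ℚ)) / (d2 : ℚ) ∧
      (1 ≤ f1 → (k - 2) * (d2 - 2) ≤ 3) := by
  have key : e * (4 - (k - 2) * (d2 - 2)) = 2 * k * d2 + f1 * (d1 - d2) * k := by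
    linear_combination (k * d2) * euler + d2 * handV + k * handF
  constructor
  · have hkq : (k : ℚ) ≠ 0 := Int.cast_ne_zero.mpr (by omega)
    have hdq : (d2 : ℚ) ≠ 0 := Int.cast_ne_zero.mpr (by omega)
    have keyq : (e : ℚ) * (4 - ((k:ℚ) - 2) * ((d2:ℚ) - 2))
        = 2 * k * d2 + (f1:ℚ) * ((d1:ℚ) - d2) * k := by exact_mod_cast key
    rw [div_mul_eq_mul_div, keyq]
    field_simp
  · intro h1
    nlinarith [key, mul_pos (sub_pos.mpr hd) (lt_of_lt_of_le (by norm_num : (0:ℤ) < 3) hk)]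
end

section
/- If integers k ≥ 3 and d2 ≥ 3 satisfy (k-2)(d2-2) = 4 (the 'Euclidean' case), then there are no positive integers v, e, f, f1, d1 with f1 ≤ 3, d1 ≥ 3, d1 ≠ d2 satisfying v - e + f = 2, 2e = kv, and 2e = f1·d1 + (f-f1)·d2. -/
theorem no_euclidean_nearly_platonic (k d2 : ℤ) (hk : 3 ≤ k) (hd2 : 3 ≤ d2)
    (heuc : (k - 2) * (d2 - 2) = 4) :
    ¬ ∃ (v e f f1 d1 : ℤ), 0 < v ∧ 0 < e ∧ 0 < f ∧ 0 < f1 ∧ f1 ≤ 3 ∧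
      3 ≤ d1 ∧ d1 ≠ d2 ∧ v - e + f = 2 ∧ 2 * e = k * v ∧
      2 * e = f1 * d1 + (f - f1) * d2 := by
  rintro ⟨v, e, f, f1, d1, hv, he, hf, hf1, hf13, hd1, hne, euler, hkv, hface⟩
  -- (k-2)*d2 = 2k follows from heuc
  have hkd2 : (k - 2) * d2 = 2 * k := by nlinarith
  -- k * f = 2k + (k-2) e
  have hkf : k * f = 2 * k + (k - 2) * e := by nlinarith
  -- key identity
  have key : k * (f1 * (d1 - d2) + 2 * d2) = 0 := by nlinarith
  have hk0 : (0:ℤ) < k := by linarith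
  have key2 : f1 * (d1 - d2) + 2 * d2 = 0 := by
    rcases mul_eq_zero.mp key with h | h
    · linarith
    · exact h
  -- d2 ≤ 6
  have hd26 : d2 ≤ 6 := by nlinarith
  rcases lt_or_gt_of_ne hne with h | h
  · nlinarith
  · nlinarith
end
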